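/- For a connected finite simple graph G, Tr_{d₂}(G) = 3 if and only if G is isomorphic to one of P₃ (the path on 3 vertices), K₃ (the triangle), or P₄ (the path on 4 vertices). -/

import Mathlib

open SimpleGraph

/-- `P : Fin k → Set V` is a d₂-transitive partition of size `k` of the graph `G`:
its parts are nonempty, every vertex lies in exactly one part, and for `i < j`
every vertex of `P j` is within graph distance 2 of some vertex of `P i`. -/
def IsD2TransPartition {V : Type*} (G : SimpleGraph V) {k : ℕ} (P : Fin k → Set V) : Prop :=
  (∀ i, (P i).Nonempty) ∧ (∀ v : V, ∃! i, v ∈ P i) ∧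
  ∀ i j : Fin k, i < j → ∀ b ∈ P j, ∃ a ∈ P i, G.edist a b ≤ 2

/-- The d₂-transitivity `Tr_{d₂}(G)`: the maximum size of a d₂-transitive partition. -/
noncomputable def Trd2 {V : Type*} (G : SimpleGraph V) : ℕ :=
  sSup {k : ℕ | ∃ P : Fin k → Set V, IsD2TransPartition G P}

section Aux

variable {V : Type*} {G : SimpleGraph V} {u v : V}

def Near2 (G : SimpleGraph V) (u v : V) : Prop :=
  u = v ∨ G.Adj u v ∨ ∃ c, G.Adj u c ∧ G.Adj c v

def IsD2' (G : SimpleGraph V) {k : ℕ} (P : Fin k → Set V) : Prop :=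
  (∀ i, (P i).Nonempty) ∧ (∀ v : V, ∃! i, v ∈ P i) ∧
  ∀ i j : Fin k, i < j → ∀ b ∈ P j, ∃ a ∈ P i, Near2 G a b


/-- within distance 2, combinatorially -/
lemma near2_symm (h : Near2 G u v) : Near2 G v u := by
  rcases h with h | h | ⟨c, h1, h2⟩
  · exact Or.inl h.symm
  · exact Or.inr (Or.inl h.symm)
  · exact Or.inr (Or.inr ⟨c, h2.symm, h1.symm⟩)

lemma edist_le_two_iff : G.edist u v ≤ 2 ↔ Near2 G u v := by
  constructor
  · intro h
    have hne : G.edist u v ≠ ⊤ := by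
      intro ht; rw [ht] at h; exact (by norm_num : ¬ ((⊤:ℕ∞) ≤ 2)) h
    obtain ⟨p, hp⟩ := exists_walk_of_edist_ne_top hne
    have hl : (p.length : ℕ∞) ≤ 2 := hp ▸ h
    have hl2 : p.length ≤ 2 := by exact_mod_cast hl
    cases p with
    | nil => exact Or.inl rfl
    | cons h1 q =>
      cases q with
      | nil => exact Or.inr (Or.inl h1)
      | cons h2 r =>
        cases r with
        | nil => exact Or.inr (Or.inr ⟨_, h1, h2⟩)
        | cons h3 s => simp [SimpleGraph.Walk.length_cons] at hl2
  · rintro (rfl | h | ⟨c, h1, h2⟩)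
    · simp [edist_self]
    · calc G.edist u v ≤ (Walk.cons h Walk.nil).length := edist_le _
        _ ≤ 2 := by simp
    · calc G.edist u v ≤ (Walk.cons h1 (Walk.cons h2 Walk.nil)).length := edist_le _
        _ ≤ 2 := by simp

lemma near2_of_dist_le_two (hr : G.Reachable u v) (h : G.dist u v ≤ 2) : Near2 G u v := by
  obtain ⟨p, hp⟩ := hr.exists_walk_length_eq_dist
  rw [← edist_le_two_iff]
  calc G.edist u v ≤ p.length := edist_le _
    _ ≤ 2 := by exact_mod_cast hp ▸ h

lemma dist_le_two_of_near2 (h : Near2 G u v) : G.dist u v ≤ 2 := by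
  rcases h with rfl | h | ⟨c, h1, h2⟩
  · simp [SimpleGraph.dist_self]
  · calc G.dist u v ≤ (Walk.cons h Walk.nil).length := dist_le _
      _ ≤ 2 := by simp
  · calc G.dist u v ≤ (Walk.cons h1 (Walk.cons h2 Walk.nil)).length := dist_le _
      _ ≤ 2 := by simp

/-- descend along a shortest walk -/
lemma exists_adj_dist_pred (hG : G.Connected) {x z : V} {n : ℕ} (h : G.dist x z = n + 1) :
    ∃ t, G.Adj t z ∧ G.dist x t = n := by
  obtain ⟨p, hp⟩ := (hG x z).exists_walk_length_eq_dist
  rw [h] at hp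
  rcases pr : p.reverse with _ | @⟨_, t, _, hadj, q⟩
  · have := congrArg Walk.length pr
    simp [hp] at this
  · refine ⟨t, hadj.symm, ?_⟩
    have hq : q.length = n := by
      have := congrArg Walk.length pr
      simpa [hp] using this.symm
    have h1 : G.dist x t ≤ n := by
      have := dist_le q.reverse
      simpa [hq] using this
    have h2 : n ≤ G.dist x t := by
      by_contra hc
      push_neg at hc
      obtain ⟨r, hr⟩ := (hG x t).exists_walk_length_eq_dist
      have := dist_le (r.concat hadj.symm)
      rw [Walk.length_concat, hr, h] at this
      omega
    omega



lemma isD2_iff {k : ℕ} {P : Fin k → Set V} : IsD2TransPartition G P ↔ IsD2' G P := by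
  unfold IsD2TransPartition IsD2'
  refine and_congr Iff.rfl (and_congr Iff.rfl ?_)
  constructor <;> intro h i j hij b hb <;> obtain ⟨a, ha, h2⟩ := h i j hij b hb <;>
    exact ⟨a, ha, by rwa [edist_le_two_iff] at * ⟩

lemma isD2'_map {W : Type*} {H : SimpleGraph W} (e : G ≃g H) {k : ℕ} {P : Fin k → Set V} (h : IsD2' G P) :
    IsD2' H (fun i => e '' P i) := by
  obtain ⟨h1, h2, h3⟩ := h
  refine ⟨fun i => (h1 i).image e, fun w => ?_, ?_⟩
  · obtain ⟨i, hi, hu⟩ := h2 (e.symm w)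
    refine ⟨i, ⟨e.symm w, hi, by simp⟩, ?_⟩
    rintro j ⟨x, hx, hxw⟩
    exact hu j (by rwa [show e.symm w = x by rw [← hxw]; simp] )
  · rintro i j hij b ⟨x, hx, rfl⟩
    obtain ⟨a, ha, hn⟩ := h3 i j hij x hx
    refine ⟨e a, ⟨a, ha, rfl⟩, ?_⟩
    rcases hn with rfl | hn | ⟨c, hc1, hc2⟩
    · exact Or.inl rfl
    · exact Or.inr (Or.inl (e.map_adj_iff.mpr hn))
    · exact Or.inr (Or.inr ⟨e c, e.map_adj_iff.mpr hc1, e.map_adj_iff.mpr hc2⟩)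

lemma exists_reps {k : ℕ} {P : Fin k → Set V} (h : IsD2' G P) :
    ∃ f : Fin k → V, Function.Injective f ∧ ∀ i, f i ∈ P i := by
  choose f hf using h.1
  refine ⟨f, fun i j hij => ?_, hf⟩
  obtain ⟨i', -, hu⟩ := h.2.1 (f i)
  have := hu i (hf i)
  have := hu j (hij ▸ hf j)
  simp_all

lemma card_ge {k : ℕ} [Fintype V] {P : Fin k → Set V} (h : IsD2' G P) :
    k ≤ Fintype.card V := by
  obtain ⟨f, hinj, -⟩ := exists_reps h
  simpa using Fintype.card_le_of_injective f hinj



lemma build4 {b c d wb wc wd : V} (hbc : b ≠ c) (hbd : b ≠ d) (hcd : c ≠ d)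
    (nbc : Near2 G b c) (nbd : Near2 G b d) (ncd : Near2 G c d)
    (hwb : wb ∉ ({b, c, d} : Set V)) (nwb : Near2 G wb b)
    (hwc : wc ∉ ({b, c, d} : Set V)) (nwc : Near2 G wc c)
    (hwd : wd ∉ ({b, c, d} : Set V)) (nwd : Near2 G wd d) :
    ∃ P : Fin 4 → Set V, IsD2' G P := by
  refine ⟨![({b, c, d} : Set V)ᶜ, {b}, {c}, {d}], ?_, ?_, ?_⟩
  · intro i
    fin_cases i
    · exact ⟨wb, hwb⟩
    · exact ⟨b, rfl⟩
    · exact ⟨c, rfl⟩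
    · exact ⟨d, rfl⟩
  · intro v
    by_cases h1 : v = b
    · subst h1
      refine ⟨1, rfl, ?_⟩
      intro j hj; fin_cases j <;> simp_all <;> tauto
    · by_cases h2 : v = c
      · subst h2
        refine ⟨2, rfl, ?_⟩
        intro j hj; fin_cases j <;> simp_all <;> tauto
      · by_cases h3 : v = d
        · subst h3
          refine ⟨3, rfl, ?_⟩
          intro j hj; fin_cases j <;> simp_all <;> tauto
        · refine ⟨0, by simp [h1, h2, h3], ?_⟩
          intro j hj; fin_cases j <;> simp_all
  · intro i j hij x hx
    fin_cases i <;> fin_cases j <;> simp_all <;>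
      first
        | exact ⟨wb, hwb, nwb⟩
        | exact ⟨wc, hwc, nwc⟩
        | exact ⟨wd, hwd, nwd⟩
        | exact nbc
        | exact nbd
        | exact ncd



lemma dist_adj_le (hG : G.Connected) {x u v : V} (h : G.Adj u v) :
    G.dist x v ≤ G.dist x u + 1 := by
  obtain ⟨r, hr⟩ := (hG x u).exists_walk_length_eq_dist
  have := SimpleGraph.dist_le (r.concat h)
  rwa [SimpleGraph.Walk.length_concat, hr] at this

lemma exists_dist_eq2 (hG : G.Connected) (x : V) {m : ℕ} :
    ∀ (y : V), m ≤ G.dist x y → ∃ z, G.dist x z = m := by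
  suffices h : ∀ n (y : V), G.dist x y = n → m ≤ n → ∃ z, G.dist x z = m by
    intro y hy; exact h _ y rfl hy
  intro n
  induction n with
  | zero => intro y hy hm; exact ⟨y, by omega⟩
  | succ n ih =>
    intro y hy hm
    rcases eq_or_lt_of_le hm with rfl | hlt
    · exact ⟨y, hy⟩
    · obtain ⟨t, -, ht⟩ := exists_adj_dist_pred hG hy
      exact ih t ht (by omega)

/-- main structure extraction: either all pairs are near2, or we get a geodesic x-w1-w2-w3. -/
lemma exists_chain (hG : G.Connected) {x y : V} (hxy : ¬ Near2 G x y) :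
    ∃ w1 w2 w3 : V, G.Adj x w1 ∧ G.Adj w1 w2 ∧ G.Adj w2 w3 ∧
      G.dist x w1 = 1 ∧ G.dist x w2 = 2 ∧ G.dist x w3 = 3 := by
  have h3 : 3 ≤ G.dist x y := by
    by_contra h
    exact hxy (near2_of_dist_le_two (hG x y) (by omega))
  obtain ⟨w3, hw3⟩ := exists_dist_eq2 hG x y h3
  obtain ⟨w2, ha23, hw2⟩ := exists_adj_dist_pred hG hw3
  obtain ⟨w1, ha12, hw1⟩ := exists_adj_dist_pred hG hw2
  obtain ⟨w0, ha01, hw0⟩ := exists_adj_dist_pred hG hw1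
  have : w0 = x := (hG.dist_eq_zero_iff.mp hw0).symm
  subst this
  exact ⟨w1, w2, w3, ha01, ha12, ha23, hw1, hw2, hw3⟩

lemma big5 [Fintype V] (hG : G.Connected) (h5 : 5 ≤ Fintype.card V) :
    ∃ P : Fin 4 → Set V, IsD2' G P := by
  classical
  by_cases hall : ∀ a b : V, Near2 G a b
  · obtain ⟨f⟩ := Function.Embedding.nonempty_of_card_le
      (show Fintype.card (Fin 4) ≤ Fintype.card V by simpa using by omega)
    have hne : ∀ i j : Fin 4, i ≠ j → f i ≠ f j := fun i j hij h => hij (f.injective h)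
    refine build4 (b := f 0) (c := f 1) (d := f 2) (wb := f 3) (wc := f 3) (wd := f 3)
      (hne 0 1 (by decide)) (hne 0 2 (by decide)) (hne 1 2 (by decide))
      (hall _ _) (hall _ _) (hall _ _) ?_ (hall _ _) ?_ (hall _ _) ?_ (hall _ _) <;>
      · simp only [Set.mem_insert_iff, Set.mem_singleton_iff]
        push_neg
        exact ⟨hne 3 0 (by decide), hne 3 1 (by decide), hne 3 2 (by decide)⟩
  · push_neg at hall
    obtain ⟨x, y, hxy⟩ := hall
    obtain ⟨w1, w2, w3, ha01, ha12, ha23, hw1, hw2, hw3⟩ := exists_chain hG hxy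
    have hd0 : G.dist x x = 0 := by simp
    have ne01 : x ≠ w1 := fun h => by rw [← h] at hw1; omega
    have ne02 : x ≠ w2 := fun h => by rw [← h] at hw2; omega
    have ne03 : x ≠ w3 := fun h => by rw [← h] at hw3; omega
    have ne12 : w1 ≠ w2 := fun h => by rw [h] at hw1; omega
    have ne13 : w1 ≠ w3 := fun h => by rw [h] at hw1; omega
    have ne23 : w2 ≠ w3 := fun h => by rw [h] at hw2; omega
    by_cases hA : ∃ w, w ∉ ({w1, w2, w3} : Set V) ∧ Near2 G w w3
    · obtain ⟨w, hw, hnw⟩ := hA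
      have hxmem : x ∉ ({w1, w2, w3} : Set V) := by
        simp only [Set.mem_insert_iff, Set.mem_singleton_iff]
        push_neg
        exact ⟨ne01, ne02, ne03⟩
      exact build4 ne12 ne13 ne23 (Or.inr (Or.inl ha12))
        (Or.inr (Or.inr ⟨w2, ha12, ha23⟩)) (Or.inr (Or.inl ha23))
        hxmem (Or.inr (Or.inl ha01)) hxmem (Or.inr (Or.inr ⟨w1, ha01, ha12⟩)) hw hnw
    · push_neg at hA
      have hN3 : ∀ u, G.Adj u w3 → u = w2 := by
        intro u hu
        have hmem : u ∈ ({w1, w2, w3} : Set V) := by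
          by_contra h
          exact hA u h (Or.inr (Or.inl hu))
        rcases hmem with rfl | rfl | rfl
        · exfalso
          have := dist_adj_le hG (x := x) hu
          omega
        · rfl
        · exact absurd rfl hu.ne
      have hN2 : ∀ u, G.Adj u w2 → u = w1 ∨ u = w3 := by
        intro u hu
        by_cases hm : u ∈ ({w1, w2, w3} : Set V)
        · rcases hm with rfl | rfl | rfl
          · exact Or.inl rfl
          · exact absurd rfl hu.ne
          · exact Or.inr rfl
        · exact absurd (Or.inr (Or.inr ⟨w2, hu, ha23⟩) : Near2 G u w3) (hA u hm)
      by_cases hB : ∃ w, w ∉ ({x, w1, w2} : Set V) ∧ Near2 G w x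
      · obtain ⟨w, hw, hnw⟩ := hB
        have h3mem : w3 ∉ ({x, w1, w2} : Set V) := by
          simp only [Set.mem_insert_iff, Set.mem_singleton_iff]
          push_neg
          exact ⟨fun h => ne03 h.symm, fun h => ne13 h.symm, fun h => ne23 h.symm⟩
        exact build4 ne01 ne02 ne12 (Or.inr (Or.inl ha01))
          (Or.inr (Or.inr ⟨w1, ha01, ha12⟩)) (Or.inr (Or.inl ha12))
          hw hnw h3mem (Or.inr (Or.inr ⟨w2, ha23.symm, ha12.symm⟩))
          h3mem (Or.inr (Or.inl ha23.symm))
      · push_neg at hB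
        exfalso
        have key : ∀ n, ∀ v : V, G.dist x v = n → v ∈ ({x, w1, w2, w3} : Set V) := by
          intro n
          induction n using Nat.strong_induction_on with
          | _ n ih =>
            intro v hv
            have sub3 : ∀ u : V, u ∈ ({x, w1, w2} : Set V) → u ∈ ({x, w1, w2, w3} : Set V) := by
              intro u hu
              rcases hu with rfl | rfl | rfl
              · exact Or.inl rfl
              · exact Or.inr (Or.inl rfl)
              · exact Or.inr (Or.inr (Or.inl rfl))
            match n, hv with
            | 0, hv =>
              exact Or.inl (hG.dist_eq_zero_iff.mp hv).symm
            | 1, hv => ?_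
            | 2, hv => ?_
            | 3, hv => ?_
            | (m+4), hv => ?_
            · -- dist 1
              obtain ⟨t, ht, ht0⟩ := exists_adj_dist_pred hG hv
              have : t = x := (hG.dist_eq_zero_iff.mp ht0).symm
              subst this
              apply sub3
              by_contra hm
              exact hB v hm (Or.inr (Or.inl ht.symm))
            · -- dist 2
              obtain ⟨t, ht, ht1⟩ := exists_adj_dist_pred hG hv
              obtain ⟨s, hs, hs0⟩ := exists_adj_dist_pred hG ht1
              have : s = x := (hG.dist_eq_zero_iff.mp hs0).symm
              subst this
              apply sub3
              by_contra hm
              exact hB v hm (Or.inr (Or.inr ⟨t, ht.symm, hs.symm⟩))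
            · -- dist 3
              obtain ⟨t, ht, ht2⟩ := exists_adj_dist_pred hG hv
              have htmem := ih 2 (by omega) t ht2
              have : t = w2 := by
                rcases htmem with rfl | rfl | rfl | rfl
                · omega
                · rw [hw1] at ht2; omega
                · rfl
                · rw [hw3] at ht2; omega
              subst this
              rcases hN2 v ht.symm with rfl | rfl
              · omega
              · exact Or.inr (Or.inr (Or.inr rfl))
            · -- dist ≥ 4
              obtain ⟨t, ht, ht3⟩ := exists_adj_dist_pred hG hv
              have htmem := ih (m+3) (by omega) t ht3
              rcases htmem with rfl | rfl | rfl | rfl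
              · omega
              · rw [hw1] at ht3; omega
              · rw [hw2] at ht3; omega
              · have := hN3 v ht.symm
                subst this
                omega
        have hsub : (Finset.univ : Finset V) ⊆ {x, w1, w2, w3} := by
          intro v _
          have := key _ v rfl
          simpa using this
        have hcard : ({x, w1, w2, w3} : Finset V).card ≤ 4 := by
          calc ({x, w1, w2, w3} : Finset V).card
              ≤ ({w1, w2, w3} : Finset V).card + 1 := Finset.card_insert_le _ _
            _ ≤ (({w2, w3} : Finset V).card + 1) + 1 := by
                exact Nat.add_le_add_right (Finset.card_insert_le _ _) 1
            _ ≤ ((({w3} : Finset V).card + 1) + 1) + 1 := by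
                exact Nat.add_le_add_right (Nat.add_le_add_right (Finset.card_insert_le _ _) 1) 1
            _ ≤ 4 := by simp
        have := Finset.card_le_card hsub
        rw [Finset.card_univ] at this
        omega



lemma build4_of_all [Fintype V] (h4 : 4 ≤ Fintype.card V) (hall : ∀ a b : V, Near2 G a b) :
    ∃ P : Fin 4 → Set V, IsD2' G P := by
  obtain ⟨f⟩ := Function.Embedding.nonempty_of_card_le
    (show Fintype.card (Fin 4) ≤ Fintype.card V by simpa using h4)
  have hne : ∀ i j : Fin 4, i ≠ j → f i ≠ f j := fun i j hij h => hij (f.injective h)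
  refine build4 (b := f 0) (c := f 1) (d := f 2) (wb := f 3) (wc := f 3) (wd := f 3)
    (hne 0 1 (by decide)) (hne 0 2 (by decide)) (hne 1 2 (by decide))
    (hall _ _) (hall _ _) (hall _ _) ?_ (hall _ _) ?_ (hall _ _) ?_ (hall _ _) <;>
    · simp only [Set.mem_insert_iff, Set.mem_singleton_iff]
      push_neg
      exact ⟨hne 3 0 (by decide), hne 3 1 (by decide), hne 3 2 (by decide)⟩

lemma four_iso [Fintype V] (hG : G.Connected) (h4 : Fintype.card V = 4)
    (hno : ¬ ∃ P : Fin 4 → Set V, IsD2' G P) : Nonempty (G ≃g pathGraph 4) := by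
  classical
  have hall : ¬ ∀ a b : V, Near2 G a b := fun h => hno (build4_of_all (by omega) h)
  push_neg at hall
  obtain ⟨x, y, hxy⟩ := hall
  obtain ⟨w1, w2, w3, ha01, ha12, ha23, hw1, hw2, hw3⟩ := exists_chain hG hxy
  have hd0 : G.dist x x = 0 := by simp
  have f : Fin 4 → V := ![x, w1, w2, w3]
  have hdist : ∀ i : Fin 4, G.dist x (![x, w1, w2, w3] i) = i.val := by
    intro i; fin_cases i <;> simp [hd0, hw1, hw2, hw3]
  have hinj : Function.Injective ![x, w1, w2, w3] := by
    intro a b hab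
    have := hdist a
    rw [hab, hdist b] at this
    exact Fin.ext this.symm
  have hbij : Function.Bijective ![x, w1, w2, w3] :=
    (Fintype.bijective_iff_injective_and_card _).mpr ⟨hinj, by simp [h4]⟩
  have nadj02 : ¬ G.Adj x w2 := by
    intro h
    have := SimpleGraph.dist_eq_one_iff_adj.mpr h
    omega
  have nadj03 : ¬ G.Adj x w3 := by
    intro h
    have := SimpleGraph.dist_eq_one_iff_adj.mpr h
    omega
  have nadj13 : ¬ G.Adj w1 w3 := by
    intro h
    have := dist_adj_le hG (x := x) h
    omega
  have nadj20 : ¬ G.Adj w2 x := fun h => nadj02 h.symm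
  have nadj30 : ¬ G.Adj w3 x := fun h => nadj03 h.symm
  have nadj31 : ¬ G.Adj w3 w1 := fun h => nadj13 h.symm
  refine ⟨(RelIso.mk (Equiv.ofBijective _ hbij) ?_).symm⟩
  intro a b
  fin_cases a <;> fin_cases b <;>
    simp [Equiv.ofBijective, pathGraph_adj, ha01, ha12, ha23, nadj02, nadj03, nadj13,
      nadj20, nadj30, nadj31, ha01.symm, ha12.symm, ha23.symm, SimpleGraph.irrefl] <;>
    decide

lemma exists_nbr [Fintype V] (hG : G.Connected) (h2 : 2 ≤ Fintype.card V) (v : V) :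
    ∃ t, G.Adj v t := by
  obtain ⟨w, hw⟩ := Fintype.exists_ne_of_one_lt_card (by omega) v
  have hd : G.dist w v ≠ 0 := fun h => hw (hG.dist_eq_zero_iff.mp h)
  obtain ⟨n, hn⟩ : ∃ n, G.dist w v = n + 1 := ⟨G.dist w v - 1, by omega⟩
  obtain ⟨t, ht, -⟩ := exists_adj_dist_pred hG hn
  exact ⟨t, ht.symm⟩

lemma three_iso [Fintype V] (hG : G.Connected) (h3 : Fintype.card V = 3) :
    Nonempty (G ≃g pathGraph 3) ∨ Nonempty (G ≃g (⊤ : SimpleGraph (Fin 3))) := by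
  classical
  obtain ⟨e⟩ : Nonempty (V ≃ Fin 3) := ⟨Fintype.equivFinOfCardEq h3⟩
  set a := e.symm 0 with ha
  set b := e.symm 1 with hb
  set c := e.symm 2 with hc
  have hmem : ∀ v : V, v = a ∨ v = b ∨ v = c := by
    intro v
    have hv : e.symm (e v) = v := e.symm_apply_apply v
    have h012 : ∀ i : Fin 3, i = 0 ∨ i = 1 ∨ i = 2 := by decide
    rcases h012 (e v) with h | h | h
    · left; rw [← hv, h]
    · right; left; rw [← hv, h]
    · right; right; rw [← hv, h]
  have hab : a ≠ b := fun h => by simp [ha, hb] at h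
  have hac : a ≠ c := fun h => by simp [ha, hc] at h
  have hbc : b ≠ c := fun h => by simp [hb, hc] at h
  -- find a "cherry" x-y-z
  obtain ⟨x, y, z, hxy, hyz, hxz, axy, ayz, hcov⟩ :
      ∃ x y z : V, x ≠ y ∧ y ≠ z ∧ x ≠ z ∧ G.Adj x y ∧ G.Adj y z ∧
        (∀ v : V, v = x ∨ v = y ∨ v = z) := by
    obtain ⟨ta, hta⟩ := exists_nbr hG (by omega) a
    have htane : ta ≠ a := fun h => G.loopless.irrefl a (h ▸ hta)
    have hcov3 : ∀ p q r : V, p = a ∨ p = b ∨ p = c → q = a ∨ q = b ∨ q = c →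
        r = a ∨ r = b ∨ r = c → p ≠ q → q ≠ r → p ≠ r → (∀ v : V, v = p ∨ v = q ∨ v = r) := by
      intro p q r hp hq hr hpq hqr hpr v
      rcases hmem v with rfl | rfl | rfl <;> rcases hp with rfl | rfl | rfl <;>
        rcases hq with rfl | rfl | rfl <;> rcases hr with rfl | rfl | rfl <;> tauto
    rcases hmem ta with rfl | rfl | rfl
    · exact absurd rfl htane
    · -- a ~ b
      obtain ⟨tc, htc⟩ := exists_nbr hG (by omega) c
      have htcne : tc ≠ c := fun h => G.loopless.irrefl c (h ▸ htc)
      rcases hmem tc with rfl | rfl | rfl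
      · -- c ~ a : chain b - a - c
        exact ⟨b, a, c, hab.symm, hac, hbc, hta.symm, htc.symm,
          hcov3 _ _ _ (Or.inr (Or.inl rfl)) (Or.inl rfl) (Or.inr (Or.inr rfl))
            hab.symm hac hbc⟩
      · -- c ~ b : chain a - b - c
        exact ⟨a, b, c, hab, hbc, hac, hta, htc.symm,
          hcov3 _ _ _ (Or.inl rfl) (Or.inr (Or.inl rfl)) (Or.inr (Or.inr rfl)) hab hbc hac⟩
      · exact absurd rfl htcne
    · -- a ~ c
      obtain ⟨tb, htb⟩ := exists_nbr hG (by omega) b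
      have htbne : tb ≠ b := fun h => G.loopless.irrefl b (h ▸ htb)
      rcases hmem tb with rfl | rfl | rfl
      · -- b ~ a : chain c - a - b
        exact ⟨c, a, b, hac.symm, hab, hbc.symm, hta.symm, htb.symm,
          hcov3 _ _ _ (Or.inr (Or.inr rfl)) (Or.inl rfl) (Or.inr (Or.inl rfl))
            hac.symm hab hbc.symm⟩
      · exact absurd rfl htbne
      · -- b ~ c : chain a - c - b
        exact ⟨a, c, b, hac, hbc.symm, hab, hta, htb.symm,
          hcov3 _ _ _ (Or.inl rfl) (Or.inr (Or.inr rfl)) (Or.inr (Or.inl rfl))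
            hac hbc.symm hab⟩
  have hinj : Function.Injective ![x, y, z] := by
    intro i j hij
    fin_cases i <;> fin_cases j <;> simp_all <;>
      first
        | rfl
        | exact absurd hij hxy
        | exact absurd hij hxz
        | exact absurd hij hyz
        | exact absurd hij.symm hxy
        | exact absurd hij.symm hxz
        | exact absurd hij.symm hyz
  have hbij : Function.Bijective ![x, y, z] :=
    (Fintype.bijective_iff_injective_and_card _).mpr ⟨hinj, by simp [h3]⟩
  by_cases hadj : G.Adj x z
  · -- complete graph
    right
    have halladj : ∀ u v : V, u ≠ v → G.Adj u v := by
      intro u v huv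
      rcases hcov u with rfl | rfl | rfl <;> rcases hcov v with rfl | rfl | rfl <;>
        first
          | exact absurd rfl huv
          | exact axy
          | exact ayz
          | exact hadj
          | exact axy.symm
          | exact ayz.symm
          | exact hadj.symm
    refine ⟨RelIso.mk (Equiv.ofBijective _ hbij).symm ?_⟩
    intro u v
    simp only [top_adj]
    constructor
    · intro h
      exact halladj u v (fun hh => h (by rw [hh]))
    · intro h hh
      have huv : u = v := Equiv.injective _ hh
      exact G.loopless.irrefl v (huv ▸ h)
  · left
    have nyx : ¬ G.Adj z x := fun h => hadj h.symm
    refine ⟨(RelIso.mk (Equiv.ofBijective _ hbij) ?_).symm⟩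
    intro i j
    fin_cases i <;> fin_cases j <;>
      simp [Equiv.ofBijective, pathGraph_adj, axy, ayz, axy.symm, ayz.symm, hadj, nyx,
        SimpleGraph.irrefl] <;> decide



lemma build3 {p q : V} (hpq : p ≠ q) (hne : (({p, q} : Set V)ᶜ).Nonempty)
    (npq : Near2 G p q) (h1 : ∀ b, b ∉ ({p, q} : Set V) → Near2 G p b)
    (h2 : ∀ b, b ∉ ({p, q} : Set V) → Near2 G q b) :
    ∃ P : Fin 3 → Set V, IsD2' G P := by
  refine ⟨![{p}, {q}, ({p, q} : Set V)ᶜ], ?_, ?_, ?_⟩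
  · intro i
    fin_cases i
    · exact ⟨p, rfl⟩
    · exact ⟨q, rfl⟩
    · exact hne
  · intro v
    by_cases h1' : v = p
    · subst h1'
      refine ⟨0, rfl, ?_⟩
      intro j hj; fin_cases j <;> simp_all
    · by_cases h2' : v = q
      · subst h2'
        refine ⟨1, rfl, ?_⟩
        intro j hj; fin_cases j <;> simp_all
      · refine ⟨2, by simp [h1', h2'], ?_⟩
        intro j hj; fin_cases j <;> simp_all
  · intro i j hij x hx
    fin_cases i <;> fin_cases j <;> simp_all <;>
      first
        | exact npq
        | exact h1 x (by simp_all)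
        | exact h2 x (by simp_all)

lemma part3_path3 : ∃ P : Fin 3 → Set (Fin 3), IsD2' (pathGraph 3) P := by
  refine build3 (p := 1) (q := 0) (by decide) ⟨2, by decide⟩ ?_ ?_ ?_ <;>
    simp only [Near2, pathGraph_adj, Set.mem_insert_iff, Set.mem_singleton_iff] <;> decide

lemma part3_top3 : ∃ P : Fin 3 → Set (Fin 3), IsD2' (⊤ : SimpleGraph (Fin 3)) P := by
  refine build3 (p := 1) (q := 0) (by decide) ⟨2, by decide⟩ ?_ ?_ ?_ <;>
    simp only [Near2, top_adj, Set.mem_insert_iff, Set.mem_singleton_iff] <;> decide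

lemma part3_path4 : ∃ P : Fin 3 → Set (Fin 4), IsD2' (pathGraph 4) P := by
  refine build3 (p := 1) (q := 2) (by decide) ⟨0, by decide⟩ ?_ ?_ ?_ <;>
    simp only [Near2, pathGraph_adj, Set.mem_insert_iff, Set.mem_singleton_iff] <;> decide

lemma singleton_parts [Fintype V] {k : ℕ} (hk : Fintype.card V = k) {P : Fin k → Set V}
    (h : IsD2' G P) : ∃ f : Fin k → V, Function.Bijective f ∧ ∀ i, P i = {f i} := by
  choose f hf using h.1
  have hinj : Function.Injective f := by
    intro i j hij
    obtain ⟨i', -, hu⟩ := h.2.1 (f i)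
    have h1 := hu i (hf i)
    have h2 := hu j (hij ▸ hf j)
    simp_all
  have hbij : Function.Bijective f :=
    (Fintype.bijective_iff_injective_and_card _).mpr ⟨hinj, by simp [hk]⟩
  refine ⟨f, hbij, fun i => ?_⟩
  ext y
  simp only [Set.mem_singleton_iff]
  constructor
  · intro hy
    obtain ⟨j, hj⟩ := hbij.2 y
    obtain ⟨i', -, hu⟩ := h.2.1 y
    have h1 := hu i hy
    have h2 := hu j (hj ▸ hf j)
    subst hj
    simp_all
  · rintro rfl
    exact hf i

lemma no4_path4 : ¬ ∃ P : Fin 4 → Set (Fin 4), IsD2' (pathGraph 4) P := by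
  rintro ⟨P, hP⟩
  obtain ⟨f, hbij, hsing⟩ := singleton_parts (by simp) hP
  obtain ⟨i, hi⟩ := hbij.2 0
  obtain ⟨j, hj⟩ := hbij.2 3
  have hij : i ≠ j := by
    intro h
    rw [h, hj] at hi
    exact absurd hi (by decide)
  have hn03 : ¬ Near2 (pathGraph 4) (0 : Fin 4) 3 := by
    simp only [Near2, pathGraph_adj]; decide
  have hn30 : ¬ Near2 (pathGraph 4) (3 : Fin 4) 0 := by
    simp only [Near2, pathGraph_adj]; decide
  rcases lt_or_gt_of_ne hij with h | h
  · obtain ⟨a, ha, hn⟩ := hP.2.2 i j h 3 (by rw [hsing j, hj]; rfl)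
    rw [hsing i, hi] at ha
    rw [ha] at hn
    exact hn03 hn
  · obtain ⟨a, ha, hn⟩ := hP.2.2 j i h 0 (by rw [hsing i, hi]; rfl)
    rw [hsing j, hj] at ha
    rw [ha] at hn
    exact hn30 hn



end Aux

theorem stmt_7 {V : Type*} [Fintype V] (G : SimpleGraph V) (hG : G.Connected) :
    Trd2 G = 3 ↔
      (Nonempty (G ≃g pathGraph 3) ∨ Nonempty (G ≃g (⊤ : SimpleGraph (Fin 3))) ∨
        Nonempty (G ≃g pathGraph 4)) := by
  classical
  set S := {k : ℕ | ∃ P : Fin k → Set V, IsD2TransPartition G P} with hS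
  have hbdd : BddAbove S := by
    refine ⟨Fintype.card V, fun k hk => ?_⟩
    obtain ⟨P, hP⟩ := hk
    exact card_ge (isD2_iff.mp hP)
  constructor
  · intro h
    have hmemS : (3 : ℕ) ∈ S := by
      have hne : S.Nonempty := by
        by_contra hne
        rw [Set.not_nonempty_iff_eq_empty] at hne
        rw [show Trd2 G = sSup S from rfl, hne] at h
        simp at h
      have := Nat.sSup_mem hne hbdd
      rwa [show sSup S = Trd2 G from rfl, h] at this
    have h4 : (4 : ℕ) ∉ S := by
      intro h4
      have := le_csSup hbdd h4
      rw [show sSup S = Trd2 G from rfl, h] at this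
      omega
    obtain ⟨P3, hP3⟩ := hmemS
    have hcard3 : 3 ≤ Fintype.card V := card_ge (isD2_iff.mp hP3)
    have hcard4 : Fintype.card V ≤ 4 := by
      by_contra hc
      push_neg at hc
      obtain ⟨P, hP⟩ := big5 hG (by omega)
      exact h4 ⟨P, isD2_iff.mpr hP⟩
    interval_cases hcv : Fintype.card V
    · rcases three_iso hG hcv with h' | h'
      · exact Or.inl h'
      · exact Or.inr (Or.inl h')
    · refine Or.inr (Or.inr (four_iso hG hcv ?_))
      intro ⟨P, hP⟩
      exact h4 ⟨P, isD2_iff.mpr hP⟩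
  · intro h
    have key : (3 : ℕ) ∈ S ∧ ∀ k ∈ S, k ≤ 3 := by
      rcases h with he | he | he <;> obtain ⟨e⟩ := he
      · refine ⟨?_, ?_⟩
        · obtain ⟨P, hP⟩ := part3_path3
          exact ⟨_, isD2_iff.mpr (isD2'_map e.symm hP)⟩
        · intro k hk
          obtain ⟨P, hP⟩ := hk
          have := card_ge (isD2_iff.mp hP)
          have hcv : Fintype.card V = 3 := by
            rw [Fintype.card_congr e.toEquiv]; simp
          omega
      · refine ⟨?_, ?_⟩
        · obtain ⟨P, hP⟩ := part3_top3
          exact ⟨_, isD2_iff.mpr (isD2'_map e.symm hP)⟩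
        · intro k hk
          obtain ⟨P, hP⟩ := hk
          have := card_ge (isD2_iff.mp hP)
          have hcv : Fintype.card V = 3 := by
            rw [Fintype.card_congr e.toEquiv]; simp
          omega
      · refine ⟨?_, ?_⟩
        · obtain ⟨P, hP⟩ := part3_path4
          exact ⟨_, isD2_iff.mpr (isD2'_map e.symm hP)⟩
        · intro k hk
          obtain ⟨P, hP⟩ := hk
          have hk4 : k ≤ 4 := by
            have := card_ge (isD2_iff.mp hP)
            have hcv : Fintype.card V = 4 := by
              rw [Fintype.card_congr e.toEquiv]; simp
            omega
          rcases Nat.lt_or_ge k 4 with h' | h'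
          · omega
          · exfalso
            have hk' : k = 4 := by omega
            subst hk'
            exact no4_path4 ⟨_, isD2'_map e (isD2_iff.mp hP)⟩
    exact le_antisymm (csSup_le ⟨3, key.1⟩ key.2) (le_csSup hbdd key.1)
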